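/- Every convex integral polygon in ℝ² that contains a lattice point in its interior contains a convex integral subpolygon with an interior lattice point and at most four edges. -/

import Mathlib

open Set

/-- The embedding of the lattice `ℤ²` into `ℝ²`. -/
def latticeEmbed (m : ℤ × ℤ) : ℝ × ℝ := ((m.1 : ℝ), (m.2 : ℝ))

/-- A convex integral polygon in `ℝ²`, recorded by a finite nonempty set of
integral points; its carrier is their convex hull. -/
structure ConvexIntegralPolygon where
  verts : Finset (ℤ × ℤ)
  nonempty : verts.Nonempty

namespace ConvexIntegralPolygon

/-- The underlying convex region in `ℝ²`. -/
def carrier (P : ConvexIntegralPolygon) : Set (ℝ × ℝ) :=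
  convexHull ℝ (latticeEmbed '' (P.verts : Set (ℤ × ℤ)))

/-- The lattice points in the topological interior of the polygon. -/
def interiorLatticePoints (P : ConvexIntegralPolygon) : Set (ℤ × ℤ) :=
  {m | latticeEmbed m ∈ interior P.carrier}

/-- The lattice points of the (closed) polygon. -/
def latticePoints (P : ConvexIntegralPolygon) : Set (ℤ × ℤ) :=
  {m | latticeEmbed m ∈ P.carrier}

/-- The number of edges of a polygon, i.e. the number of its vertices
(extreme points of the carrier). -/
noncomputable def numEdges (P : ConvexIntegralPolygon) : ℕ :=
  (Set.extremePoints ℝ P.carrier).ncard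

end ConvexIntegralPolygon

namespace Stmt0Aux

def dot (u v : ℝ × ℝ) : ℝ := u.1 * v.1 + u.2 * v.2

def det2 (u v : ℝ × ℝ) : ℝ := u.1 * v.2 - u.2 * v.1

lemma ne_zero_iff {u : ℝ × ℝ} : u ≠ 0 ↔ u.1 ≠ 0 ∨ u.2 ≠ 0 := by
  simp only [Ne, Prod.ext_iff, Prod.fst_zero, Prod.snd_zero, not_and_or]

lemma dot_pos_self {u : ℝ × ℝ} (hu : u ≠ 0) : 0 < dot u u := by
  rcases ne_zero_iff.mp hu with h | h <;>
    · have := mul_self_pos.mpr h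
      simp only [dot]; nlinarith [mul_self_nonneg u.1, mul_self_nonneg u.2]

lemma exists_smul_of_det2_eq_zero {d y : ℝ × ℝ} (hd : d ≠ 0) (h : det2 d y = 0) :
    ∃ c : ℝ, y = c • d := by
  simp only [det2] at h
  rcases ne_zero_iff.mp hd with h1 | h1
  · refine ⟨y.1 / d.1, ?_⟩
    apply Prod.ext
    · simp only [Prod.smul_fst, smul_eq_mul]; field_simp
    · simp only [Prod.smul_snd, smul_eq_mul]; field_simp; nlinarith
  · refine ⟨y.2 / d.2, ?_⟩
    apply Prod.ext
    · simp only [Prod.smul_fst, smul_eq_mul]; field_simp; nlinarith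
    · simp only [Prod.smul_snd, smul_eq_mul]; field_simp

lemma halfplane_of_mem_interior {V : Set (ℝ × ℝ)} {x₀ : ℝ × ℝ}
    (h : x₀ ∈ interior (convexHull ℝ V)) {u : ℝ × ℝ} (hu : u ≠ 0) :
    ∃ v ∈ V, 0 < dot u (v - x₀) := by
  by_contra hc
  push_neg at hc
  have hlin : IsLinearMap ℝ (fun x : ℝ × ℝ => dot u x) :=
    ⟨fun x y => by simp only [dot, Prod.fst_add, Prod.snd_add]; ring,
     fun c x => by simp only [dot, Prod.smul_fst, Prod.smul_snd, smul_eq_mul]; ring⟩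
  have hH : convexHull ℝ V ⊆ {x | dot u x ≤ dot u x₀} := by
    apply convexHull_min _ (convex_halfSpace_le hlin _)
    intro v hv
    have h1 := hc v hv
    simp only [dot, Prod.fst_sub, Prod.snd_sub] at h1
    simp only [mem_setOf_eq, dot]
    nlinarith
  rw [mem_interior_iff_mem_nhds, Metric.mem_nhds_iff] at h
  obtain ⟨ε, hε, hball⟩ := h
  have hun : 0 < ‖u‖ := norm_pos_iff.mpr hu
  set δ : ℝ := ε / (2 * ‖u‖) with hδ
  have hδpos : 0 < δ := by positivity
  have hmem : x₀ + δ • u ∈ Metric.ball x₀ ε := by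
    rw [Metric.mem_ball, dist_eq_norm]
    have h2 : x₀ + δ • u - x₀ = δ • u := by abel
    rw [h2, norm_smul, Real.norm_eq_abs, abs_of_pos hδpos]
    have : δ * ‖u‖ = ε / 2 := by rw [hδ, div_mul_eq_mul_div, div_eq_iff (by positivity)]; ring
    rw [this]; linarith
  have h3 := hH (hball hmem)
  simp only [mem_setOf_eq, dot, Prod.fst_add, Prod.snd_add, Prod.smul_fst, Prod.smul_snd,
    smul_eq_mul] at h3
  have h4 := dot_pos_self hu
  simp only [dot] at h4
  nlinarith

lemma mem_convexHull_of_halfplanes {V : Set (ℝ × ℝ)} (hV : V.Finite) {x₀ : ℝ × ℝ}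
    (hP : ∀ u : ℝ × ℝ, u ≠ 0 → ∃ v ∈ V, 0 < dot u (v - x₀)) :
    x₀ ∈ convexHull ℝ V := by
  by_contra hc
  obtain ⟨f, u, hfx, hfv⟩ := geometric_hahn_banach_point_closed (convex_convexHull ℝ V)
      (hV.isCompact_convexHull (𝕜 := ℝ)).isClosed hc
  set uf : ℝ × ℝ := (f (1, 0), f (0, 1)) with huf
  have key : ∀ x : ℝ × ℝ, f x = dot uf x := by
    intro x
    have hx : x = x.1 • ((1:ℝ), (0:ℝ)) + x.2 • ((0:ℝ), (1:ℝ)) := by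
      apply Prod.ext <;> simp
    conv_lhs => rw [hx]
    rw [map_add, map_smul, map_smul]
    simp only [dot, huf, smul_eq_mul]
    ring
  by_cases h0 : uf = 0
  · obtain ⟨v, hv, -⟩ := hP (1, 0) (by simp [Prod.ext_iff])
    have h1 := hfv _ (subset_convexHull ℝ V hv)
    rw [key, h0] at hfx h1
    simp only [dot, Prod.fst_zero, Prod.snd_zero, zero_mul, mul_zero, add_zero] at hfx h1
    linarith
  · obtain ⟨v, hv, hdot⟩ := hP (-uf) (neg_ne_zero.mpr h0)
    have h1 := hfv _ (subset_convexHull ℝ V hv)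
    rw [key] at hfx h1
    have h2 : dot uf v < dot uf x₀ := by
      simp only [dot, Prod.fst_neg, Prod.snd_neg, Prod.fst_sub, Prod.snd_sub] at hdot ⊢
      nlinarith
    linarith

lemma mem_interior_convexHull {ι : Type*} [Fintype ι] [DecidableEq ι] {x₀ : ℝ × ℝ}
    {z : ι → ℝ × ℝ}
    {w : ι → ℝ} (hw : ∀ i, 0 < w i) (hsum : ∑ i, w i • (z i - x₀) = 0)
    {i₁ i₂ : ι} (hdet : det2 (z i₁ - x₀) (z i₂ - x₀) ≠ 0) :
    x₀ ∈ interior (convexHull ℝ (Set.range z)) := by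
  set a := z i₁ - x₀ with ha
  set b := z i₂ - x₀ with hb
  have hi12 : i₁ ≠ i₂ := by
    rintro rfl
    apply hdet
    simp only [det2, ← ha]
    ring
  set L := ∑ i, w i with hL
  have hLpos : 0 < L := Finset.sum_pos (fun i _ => hw i) ⟨i₁, Finset.mem_univ _⟩
  have hD : det2 a b ≠ 0 := hdet
  set c₁ : ℝ × ℝ → ℝ := fun x => ((x - x₀).1 * b.2 - (x - x₀).2 * b.1) / det2 a b with hc₁
  set c₂ : ℝ × ℝ → ℝ := fun x => (a.1 * (x - x₀).2 - a.2 * (x - x₀).1) / det2 a b with hc₂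
  have hkey : ∀ x : ℝ × ℝ, c₁ x • a + c₂ x • b = x - x₀ := by
    intro x
    apply Prod.ext <;>
    · simp only [hc₁, hc₂, det2, Prod.fst_add, Prod.snd_add, Prod.smul_fst, Prod.smul_snd,
        smul_eq_mul, Prod.fst_sub, Prod.snd_sub]
      rw [div_mul_eq_mul_div, div_mul_eq_mul_div, ← add_div, div_eq_iff (by
        simpa [det2] using hD)]
      ring
  set wm := min (w i₁) (w i₂) with hwm
  have hwmpos : 0 < wm := lt_min (hw i₁) (hw i₂)
  set δ := min (4⁻¹ : ℝ) (wm / (4 * L)) with hδ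
  have hδpos : 0 < δ := lt_min (by norm_num) (by positivity)
  have hδ4 : δ ≤ 4⁻¹ := min_le_left _ _
  have hδw : 4 * L * δ ≤ wm := by
    have h1 : δ ≤ wm / (4 * L) := min_le_right _ _
    rw [le_div_iff₀ (by positivity)] at h1
    linarith
  rw [mem_interior]
  refine ⟨{x | |c₁ x| < δ ∧ |c₂ x| < δ}, ?_, ?_, ?_⟩
  · rintro x ⟨h1, h2⟩
    rw [abs_lt] at h1 h2
    have ht : (2:ℝ)⁻¹ ≤ 1 - c₁ x - c₂ x := by
      have := hδ4; norm_num at this ⊢; linarith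
    set sc := L / (1 - c₁ x - c₂ x) with hsc
    have hscpos : 0 < sc := div_pos hLpos (by linarith)
    have hscL : sc * (1 - c₁ x - c₂ x) = L := by
      rw [hsc]; exact div_mul_cancel₀ _ (ne_of_gt (by linarith))
    have hsle : sc ≤ 2 * L := by
      rw [hsc, div_le_iff₀ (by linarith)]
      nlinarith
    have habs1 : |sc * c₁ x| ≤ wm := by
      rw [abs_mul, abs_of_pos hscpos]
      have : |c₁ x| ≤ δ := by rw [abs_le]; constructor <;> linarith
      nlinarith [abs_nonneg (c₁ x)]
    have habs2 : |sc * c₂ x| ≤ wm := by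
      rw [abs_mul, abs_of_pos hscpos]
      have : |c₂ x| ≤ δ := by rw [abs_le]; constructor <;> linarith
      nlinarith [abs_nonneg (c₂ x)]
    set ν : ι → ℝ := fun i =>
      w i + (if i = i₁ then sc * c₁ x else 0) + (if i = i₂ then sc * c₂ x else 0) with hν
    have hνnn : ∀ i, 0 ≤ ν i := by
      intro i
      rw [abs_le] at habs1 habs2
      simp only [hν]
      by_cases e1 : i = i₁
      · subst e1
        rw [if_pos rfl, if_neg hi12]
        have : wm ≤ w i := by rw [hwm]; exact min_le_left _ _
        linarith [habs1.1]
      · rw [if_neg e1]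
        by_cases e2 : i = i₂
        · subst e2
          rw [if_pos rfl]
          have : wm ≤ w i := by rw [hwm]; exact min_le_right _ _
          linarith [habs2.1]
        · rw [if_neg e2]
          simpa using (hw i).le
    have hνsum : ∑ i, ν i = sc := by
      simp only [hν]
      rw [Finset.sum_add_distrib, Finset.sum_add_distrib, Finset.sum_ite_eq' Finset.univ i₁,
        Finset.sum_ite_eq' Finset.univ i₂]
      simp only [Finset.mem_univ, if_true, ← hL]
      linarith [hscL]
    have hνz : ∑ i, ν i • (z i - x₀) = sc • (x - x₀) := by
      simp only [hν, add_smul, ite_smul, zero_smul]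
      rw [Finset.sum_add_distrib, Finset.sum_add_distrib, Finset.sum_ite_eq' Finset.univ i₁,
        Finset.sum_ite_eq' Finset.univ i₂]
      simp only [Finset.mem_univ, if_true, hsum, zero_add, ← ha, ← hb]
      rw [← hkey x, smul_add, smul_smul, smul_smul]
    have hcm : Finset.univ.centerMass ν z = x := by
      rw [Finset.centerMass, hνsum]
      have hz : ∑ i, ν i • z i = sc • x := by
        have e : ∀ i, ν i • z i = ν i • (z i - x₀) + ν i • x₀ := by
          intro i; rw [smul_sub]; abel
        rw [Finset.sum_congr rfl fun i _ => e i, Finset.sum_add_distrib, hνz,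
          ← Finset.sum_smul, hνsum, smul_sub]
        abel
      rw [hz, smul_smul, inv_mul_cancel₀ (ne_of_gt hscpos), one_smul]
    rw [← hcm]
    exact Finset.centerMass_mem_convexHull _ (fun i _ => hνnn i) (by rw [hνsum]; exact hscpos)
      (fun i _ => Set.mem_range_self i)
  · have hcont1 : Continuous c₁ := by
      simp only [hc₁]
      fun_prop
    have hcont2 : Continuous c₂ := by
      simp only [hc₂]
      fun_prop
    exact (isOpen_lt hcont1.abs continuous_const).inter (isOpen_lt hcont2.abs continuous_const)
  · constructor <;> · simp only [hc₁, hc₂, mem_setOf_eq, sub_self, Prod.fst_zero, Prod.snd_zero]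
                      norm_num [hδpos]

lemma dot_smul_add (u : ℝ × ℝ) (t t' : ℝ) (y y' : ℝ × ℝ) :
    dot u (t • y + t' • y') = t * dot u y + t' * dot u y' := by
  simp only [dot, Prod.fst_add, Prod.snd_add, Prod.smul_fst, Prod.smul_snd, smul_eq_mul]
  ring

open ConvexIntegralPolygon in
lemma build (P : ConvexIntegralPolygon) (m : ℤ × ℤ) (pts : Finset (ℤ × ℤ))
    (hne : pts.Nonempty) (hcard : pts.card ≤ 4)
    (hsub : latticeEmbed '' (pts : Set (ℤ × ℤ)) ⊆ P.carrier)
    (hint : latticeEmbed m ∈ interior (convexHull ℝ (latticeEmbed '' (pts : Set (ℤ × ℤ))))) :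
    ∃ Q : ConvexIntegralPolygon, Q.carrier ⊆ P.carrier ∧
      Q.interiorLatticePoints.Nonempty ∧ Q.numEdges ≤ 4 := by
  refine ⟨⟨pts, hne⟩, ?_, ⟨m, hint⟩, ?_⟩
  · exact convexHull_min hsub (convex_convexHull ℝ _)
  · unfold ConvexIntegralPolygon.numEdges ConvexIntegralPolygon.carrier
    calc (Set.extremePoints ℝ (convexHull ℝ (latticeEmbed '' (pts : Set (ℤ × ℤ))))).ncard
        ≤ (latticeEmbed '' (pts : Set (ℤ × ℤ))).ncard :=
          Set.ncard_le_ncard extremePoints_convexHull_subset (pts.finite_toSet.image _)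
      _ ≤ pts.card := by
          rw [← Set.ncard_coe_finset pts]
          exact Set.ncard_image_le pts.finite_toSet
      _ ≤ 4 := hcard

end Stmt0Aux

open ConvexIntegralPolygon in
/-- Every convex integral polygon in `ℝ²` containing a lattice point in its interior
contains a convex integral subpolygon with an interior lattice point and at most
four edges. -/
theorem stmt0 (P : ConvexIntegralPolygon) (h : P.interiorLatticePoints.Nonempty) :
    ∃ Q : ConvexIntegralPolygon, Q.carrier ⊆ P.carrier ∧
      Q.interiorLatticePoints.Nonempty ∧ Q.numEdges ≤ 4 := by
  classical
  obtain ⟨m, hm⟩ := h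
  set x₀ := latticeEmbed m with hx₀
  set V : Set (ℝ × ℝ) := latticeEmbed '' (P.verts : Set (ℤ × ℤ)) with hVdef
  have hm' : x₀ ∈ interior (convexHull ℝ V) := hm
  set V' : Set (ℝ × ℝ) := V \ {x₀} with hV'
  have hVfin : V'.Finite := (P.verts.finite_toSet.image _).diff
  have hP : ∀ u : ℝ × ℝ, u ≠ 0 → ∃ v ∈ V', 0 < Stmt0Aux.dot u (v - x₀) := by
    intro u hu
    obtain ⟨v, hv, hd⟩ := Stmt0Aux.halfplane_of_mem_interior hm' hu
    refine ⟨v, ⟨hv, fun hveq => ?_⟩, hd⟩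
    rw [mem_singleton_iff] at hveq
    rw [hveq, sub_self] at hd
    simp [Stmt0Aux.dot] at hd
  have hVsub : V' ⊆ V := diff_subset
  have hx₀conv : x₀ ∈ convexHull ℝ V' := Stmt0Aux.mem_convexHull_of_halfplanes hVfin hP
  obtain ⟨ι, hfin, z, w, hrange, hindep, hwpos, hwsum, hzsum⟩ :=
    eq_pos_convex_span_of_mem_convexHull hx₀conv
  have hsum0 : ∑ i, w i • (z i - x₀) = 0 := by
    simp only [smul_sub]
    rw [Finset.sum_sub_distrib, hzsum, ← Finset.sum_smul, hwsum, one_smul, sub_self]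
  have hzV' : ∀ i, z i ∈ V' := fun i => hrange (Set.mem_range_self i)
  have hpre : ∀ v, v ∈ V' → ∃ mv : ℤ × ℤ, mv ∈ P.verts ∧ latticeEmbed mv = v := by
    rintro v ⟨⟨mv, hmv, rfl⟩, -⟩
    exact ⟨mv, hmv, rfl⟩
  have hptC : ∀ v, v ∈ V' → v ∈ P.carrier := fun v hv => subset_convexHull ℝ _ (hVsub hv)
  by_cases hcase : ∃ i j : ι, Stmt0Aux.det2 (z i - x₀) (z j - x₀) ≠ 0
  · obtain ⟨i₁, i₂, hdet⟩ := hcase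
    have hint := Stmt0Aux.mem_interior_convexHull hwpos hsum0 hdet
    choose M hM1 hM2 using fun i => hpre (z i) (hzV' i)
    have hMe : latticeEmbed '' ((Finset.univ.image M : Finset (ℤ × ℤ)) : Set (ℤ × ℤ))
        = Set.range z := by
      rw [Finset.coe_image, Finset.coe_univ, Set.image_univ, ← Set.range_comp]
      exact congrArg Set.range (funext fun i => hM2 i)
    apply Stmt0Aux.build P m (Finset.univ.image M)
    · exact ⟨M i₁, Finset.mem_image_of_mem M (Finset.mem_univ _)⟩
    · calc (Finset.univ.image M).card ≤ Finset.univ.card := Finset.card_image_le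
        _ = Fintype.card ι := Finset.card_univ
        _ ≤ 4 := by
            have h1 := hindep.card_le_finrank_succ
            have h2 := Submodule.finrank_le (vectorSpan ℝ (Set.range z))
            have h3 : Module.finrank ℝ (ℝ × ℝ) = 2 := by
              simp [Module.finrank_prod]
            omega
    · rw [hMe]
      rintro x ⟨i, rfl⟩
      exact hptC _ (hzV' i)
    · rw [hMe]
      exact hint
  · push_neg at hcase
    have hnι : Nonempty ι := by
      by_contra hempty
      rw [not_nonempty_iff] at hempty
      rw [Finset.univ_eq_empty, Finset.sum_empty] at hwsum
      exact zero_ne_one hwsum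
    obtain ⟨i₀⟩ := hnι
    have hd0 : z i₀ - x₀ ≠ 0 := by
      intro h0
      exact (hzV' i₀).2 (by rw [mem_singleton_iff, ← sub_eq_zero]; exact h0)
    choose c hc using fun i => Stmt0Aux.exists_smul_of_det2_eq_zero hd0 (hcase i₀ i)
    have hc0 : c i₀ = 1 := by
      have h1 : (1 - c i₀) • (z i₀ - x₀) = 0 := by
        rw [sub_smul, one_smul, ← hc i₀, sub_self]
      rcases smul_eq_zero.mp h1 with h' | h'
      · linarith
      · exact absurd h' hd0
    have hsumc : ∑ i, w i * c i = 0 := by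
      have h1 : (∑ i, w i * c i) • (z i₀ - x₀) = 0 := by
        rw [Finset.sum_smul]
        calc ∑ i, (w i * c i) • (z i₀ - x₀) = ∑ i, w i • (z i - x₀) := by
              apply Finset.sum_congr rfl
              intro i _
              rw [hc i, smul_smul]
          _ = 0 := hsum0
      rcases smul_eq_zero.mp h1 with h' | h'
      · exact h'
      · exact absurd h' hd0
    obtain ⟨j, hj⟩ : ∃ j, c j < 0 := by
      by_contra hno
      push_neg at hno
      have hpos : 0 < ∑ i, w i * c i :=
        Finset.sum_pos' (fun i _ => mul_nonneg (hwpos i).le (hno i))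
          ⟨i₀, Finset.mem_univ _, by rw [hc0, mul_one]; exact hwpos i₀⟩
      rw [hsumc] at hpos
      exact lt_irrefl _ hpos
    set n : ℝ × ℝ := (-(z i₀ - x₀).2, (z i₀ - x₀).1) with hn
    have hn0 : n ≠ 0 := by
      rw [Stmt0Aux.ne_zero_iff] at hd0 ⊢
      simp only [hn, neg_ne_zero]
      tauto
    obtain ⟨r, hrV, hr⟩ := hP n hn0
    obtain ⟨s, hsV, hs⟩ := hP (-n) (neg_ne_zero.mpr hn0)
    have hs' : Stmt0Aux.dot n (s - x₀) < 0 := by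
      have hh : Stmt0Aux.dot (-n) (s - x₀) = -Stmt0Aux.dot n (s - x₀) := by
        simp only [Stmt0Aux.dot, Prod.fst_neg, Prod.snd_neg]; ring
      rw [hh] at hs
      linarith
    have hdet_dot : ∀ y : ℝ × ℝ, Stmt0Aux.det2 (z i₀ - x₀) y = Stmt0Aux.dot n y := by
      intro y
      simp only [Stmt0Aux.det2, Stmt0Aux.dot, hn]
      ring
    set σ := Stmt0Aux.dot n (r - x₀) with hσdef
    set ν := -Stmt0Aux.dot n (s - x₀) with hνdef
    have hσpos : 0 < σ := hr
    have hνpos : 0 < ν := by rw [hνdef]; linarith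
    obtain ⟨e, he⟩ : ∃ e : ℝ, ν • (r - x₀) + σ • (s - x₀) = e • (z i₀ - x₀) := by
      apply Stmt0Aux.exists_smul_of_det2_eq_zero hd0
      rw [hdet_dot, Stmt0Aux.dot_smul_add, hσdef, hνdef]
      ring
    have hcj0 : c j ≠ 0 := ne_of_lt hj
    set ωq := (1 + |e|) / (-(c j)) with hωqdef
    set ωp := 1 + |e| - e with hωpdef
    have hωqpos : 0 < ωq := div_pos (by positivity) (by linarith)
    have hωppos : 0 < ωp := by rw [hωpdef]; linarith [le_abs_self e]
    have hco : ωp + ωq * c j + e = 0 := by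
      have h4 : ωq * c j = -(1 + |e|) := by
        rw [hωqdef, div_mul_eq_mul_div, div_eq_iff (neg_ne_zero.mpr hcj0)]
        ring
      rw [hωpdef, h4]
      ring
    have happ := Stmt0Aux.mem_interior_convexHull (ι := Fin 4)
      (x₀ := x₀) (z := ![z i₀, z j, r, s]) (w := ![ωp, ωq, ν, σ])
      (i₁ := 0) (i₂ := 2)
      (by
        intro i
        fin_cases i
        · simpa using hωppos
        · simpa using hωqpos
        · simpa using hνpos
        · simpa using hσpos)
      (by
        rw [Fin.sum_univ_four]
        simp only [Matrix.cons_val_zero, Matrix.cons_val_one, Matrix.head_cons,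
          Matrix.cons_val_two, Matrix.tail_cons, Matrix.cons_val_three]
        rw [add_assoc (ωp • (z i₀ - x₀) + ωq • (z j - x₀)), he, hc j,
          smul_smul, ← add_smul, ← add_smul, hco, zero_smul])
      (by
        simp only [Matrix.cons_val_zero, Matrix.cons_val_two, Matrix.tail_cons, Matrix.head_cons]
        rw [hdet_dot]
        exact ne_of_gt hσpos)
    obtain ⟨m1, hm11, hm12⟩ := hpre _ (hzV' i₀)
    obtain ⟨m2, hm21, hm22⟩ := hpre _ (hzV' j)
    obtain ⟨m3, hm31, hm32⟩ := hpre r hrV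
    obtain ⟨m4, hm41, hm42⟩ := hpre s hsV
    have hSQ : Set.range ![z i₀, z j, r, s] ⊆
        latticeEmbed '' (({m1, m2, m3, m4} : Finset (ℤ × ℤ)) : Set (ℤ × ℤ)) := by
      rintro x ⟨i, rfl⟩
      fin_cases i
      · exact ⟨m1, by simp, by simp [hm12]⟩
      · exact ⟨m2, by simp, by simp [hm22]⟩
      · exact ⟨m3, by simp, by simp [hm32]⟩
      · exact ⟨m4, by simp, by simp [hm42]⟩
    apply Stmt0Aux.build P m {m1, m2, m3, m4}
    · exact ⟨m1, by simp⟩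
    · refine le_trans (Finset.card_insert_le _ _) ?_
      refine le_trans (Nat.add_le_add_right (Finset.card_insert_le _ _) 1) ?_
      refine le_trans (Nat.add_le_add_right (Nat.add_le_add_right (Finset.card_insert_le _ _) 1) 1) ?_
      simp
    · rintro x ⟨mv, hmv, rfl⟩
      simp only [Finset.coe_insert, Set.mem_insert_iff, Finset.coe_singleton,
        Set.mem_singleton_iff] at hmv
      rcases hmv with rfl | rfl | rfl | rfl
      · rw [hm12]; exact hptC _ (hzV' i₀)
      · rw [hm22]; exact hptC _ (hzV' j)
      · rw [hm32]; exact hptC _ hrV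
      · rw [hm42]; exact hptC _ hsV
    · exact interior_mono (convexHull_mono hSQ) happ
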